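/- (Commutator identity used in the derivation of the Bogoliubov–Kubo–Mori metric.) Let A be a positive-definite Hermitian d×d complex matrix and B any d×d complex matrix. Then [log A, B] = ∫₀^∞ [ A, (A+tI)^{-1} B (A+tI)^{-1} ] dt, where [X,Y] := XY − YX, log A is the matrix logarithm of A, and the integral of the matrix-valued function is taken entrywise. -/

import Mathlib

open Matrix MeasureTheory Set Filter
open scoped ComplexOrder Topology

section scalar
variable {b c : ℝ}

lemma bkm_hasDeriv (hb : 0 < b) (hc : 0 < c) {x : ℝ} (hx : x ∈ Set.Ioi (0:ℝ)) :
    HasDerivAt (fun t => Real.log (c + t) - Real.log (b + t))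
      ((b - c) / ((b + x) * (c + x))) x := by
  have hx0 : 0 < x := hx
  have h1 : HasDerivAt (fun t => Real.log (c + t)) (1 / (c + x)) x := by
    have := ((hasDerivAt_id x).const_add c).log (by positivity)
    simpa using this
  have h2 : HasDerivAt (fun t => Real.log (b + t)) (1 / (b + x)) x := by
    have := ((hasDerivAt_id x).const_add b).log (by positivity)
    simpa using this
  have h := h1.sub h2
  refine h.congr_deriv ?_
  rw [div_sub_div _ _ (by positivity : c + x ≠ 0) (by positivity : b + x ≠ 0)]
  rw [div_eq_div_iff (by positivity) (by positivity)]
  ring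

lemma bkm_cont (hb : 0 < b) (hc : 0 < c) :
    ContinuousWithinAt (fun t => Real.log (c + t) - Real.log (b + t)) (Set.Ici 0) 0 := by
  apply ContinuousAt.continuousWithinAt
  have h1 : ContinuousAt (fun t : ℝ => Real.log (c + t)) 0 :=
    (Real.continuousAt_log (by positivity)).comp (by fun_prop)
  have h2 : ContinuousAt (fun t : ℝ => Real.log (b + t)) 0 :=
    (Real.continuousAt_log (by positivity)).comp (by fun_prop)
  exact h1.sub h2

lemma bkm_tendsto (hb : 0 < b) (hc : 0 < c) :
    Tendsto (fun t => Real.log (c + t) - Real.log (b + t)) atTop (𝓝 0) := by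
  have hg : Tendsto (fun t : ℝ => (c + t) / (b + t)) atTop (𝓝 1) := by
    have h0 : Tendsto (fun t : ℝ => (c - b) / (b + t)) atTop (𝓝 0) :=
      Tendsto.div_atTop tendsto_const_nhds (tendsto_atTop_add_const_left _ b tendsto_id)
    have := h0.const_add 1
    rw [add_zero] at this
    apply this.congr'
    filter_upwards [Filter.eventually_gt_atTop (0:ℝ)] with t ht
    have : b + t ≠ 0 := by positivity
    field_simp
    ring
  have := (Real.continuousAt_log one_ne_zero).tendsto.comp hg
  rw [Real.log_one] at this
  apply this.congr'
  filter_upwards [Filter.eventually_gt_atTop (0:ℝ)] with t ht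
  simp only [Function.comp]
  rw [Real.log_div (by positivity) (by positivity)]

lemma bkm_integrable (hb : 0 < b) (hc : 0 < c) :
    IntegrableOn (fun t => (b - c) / ((b + t) * (c + t))) (Set.Ioi 0) := by
  rcases le_total c b with h | h
  · exact integrableOn_Ioi_deriv_of_nonneg (bkm_cont hb hc) (fun x hx => bkm_hasDeriv hb hc hx)
      (fun x hx => by have : (0:ℝ) < x := hx; exact div_nonneg (by linarith) (by positivity)) (bkm_tendsto hb hc)
  · have := integrableOn_Ioi_deriv_of_nonneg (bkm_cont hc hb) (fun x hx => bkm_hasDeriv hc hb hx)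
      (fun x hx => by have : (0:ℝ) < x := hx; exact div_nonneg (by linarith) (by positivity)) (bkm_tendsto hc hb)
    have h2 : IntegrableOn (fun x => -((c - b) / ((c + x) * (b + x)))) (Set.Ioi 0) := this.neg
    apply IntegrableOn.congr_fun h2 ?_ measurableSet_Ioi
    intro x hx
    show -((c - b) / ((c + x) * (b + x))) = (b - c) / ((b + x) * (c + x))
    rw [← neg_div, neg_sub, mul_comm]

lemma bkm_integral (hb : 0 < b) (hc : 0 < c) :
    ∫ t in Set.Ioi (0:ℝ), (b - c) / ((b + t) * (c + t)) = Real.log b - Real.log c := by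
  have := integral_Ioi_of_hasDerivAt_of_tendsto (bkm_cont hb hc)
    (fun x hx => bkm_hasDeriv hb hc hx) (bkm_integrable hb hc) (bkm_tendsto hb hc)
  rw [this]
  simp only [add_zero, zero_sub]
  ring

end scalar

lemma bkm_entry {d : ℕ} (U M : Matrix (Fin d) (Fin d) ℂ) (i j : Fin d) :
    (U * M * Uᴴ) i j = ∑ x, ∑ k, U i k * M k x * star (U j x) := by
  simp [Matrix.mul_apply, Matrix.conjTranspose_apply, Finset.sum_mul]

theorem matrix_log_commutator_integral {d : ℕ}
    (A B : Matrix (Fin d) (Fin d) ℂ) (hA : A.PosDef)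
    (Uu : Matrix (Fin d) (Fin d) ℂ) (a : Fin d → ℝ)
    (hUu : Uuᴴ * Uu = 1) (ha : ∀ k, 0 < a k)
    (hdecomp : A = Uu * Matrix.diagonal (fun k => (a k : ℂ)) * Uuᴴ)
    (logA : Matrix (Fin d) (Fin d) ℂ)
    (hlog : logA = Uu * Matrix.diagonal (fun k => (Real.log (a k) : ℂ)) * Uuᴴ) :
    ∀ i j, (logA * B - B * logA) i j
      = ∫ t in Set.Ioi (0 : ℝ),
          ((A * ((A + (t : ℂ) • 1)⁻¹ * B * (A + (t : ℂ) • 1)⁻¹)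
            - ((A + (t : ℂ) • 1)⁻¹ * B * (A + (t : ℂ) • 1)⁻¹) * A) i j) := by
  intro i j
  have hUU2 : Uu * Uuᴴ = 1 := mul_eq_one_comm.mp hUu
  have cancel : ∀ Z : Matrix (Fin d) (Fin d) ℂ, Uuᴴ * (Uu * Z) = Z := fun Z => by
    rw [← Matrix.mul_assoc, hUu, Matrix.one_mul]
  have cancel' : ∀ Z : Matrix (Fin d) (Fin d) ℂ, Uu * (Uuᴴ * Z) = Z := fun Z => by
    rw [← Matrix.mul_assoc, hUU2, Matrix.one_mul]
  set C : Matrix (Fin d) (Fin d) ℂ := Uuᴴ * B * Uu with hCdef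
  set N : ℝ → Matrix (Fin d) (Fin d) ℂ :=
    fun t => Matrix.diagonal (fun k => ((a k : ℂ) + t)⁻¹) with hNdef
  have hne : ∀ (t : ℝ), 0 < t → ∀ k, (a k : ℂ) + (t : ℂ) ≠ 0 := by
    intro t ht k
    have : ((a k + t : ℝ) : ℂ) ≠ 0 := by
      rw [Complex.ofReal_ne_zero]
      have := ha k; positivity
    simpa using this
  -- A + t•1 in diagonalized form
  have hAt : ∀ t : ℝ, A + (t : ℂ) • 1
      = Uu * Matrix.diagonal (fun k => (a k : ℂ) + t) * Uuᴴ := by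
    intro t
    have hUU' : Uu * Uuᴴ = 1 := mul_eq_one_comm.mp hUu
    have h1 : (t : ℂ) • (1 : Matrix (Fin d) (Fin d) ℂ)
        = Uu * Matrix.diagonal (fun _ => (t : ℂ)) * Uuᴴ := by
      rw [← Matrix.smul_one_eq_diagonal, Matrix.mul_smul, Matrix.mul_one, Matrix.smul_mul, hUU']
    rw [hdecomp, h1, ← Matrix.add_mul, ← Matrix.mul_add, Matrix.diagonal_add]
  have hinv : ∀ t : ℝ, 0 < t → (A + (t : ℂ) • 1)⁻¹ = Uu * N t * Uuᴴ := by
    intro t ht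
    apply Matrix.inv_eq_right_inv
    rw [hAt t]
    have hdig : Matrix.diagonal (fun k => (a k : ℂ) + t) * N t = 1 := by
      rw [hNdef]
      rw [Matrix.diagonal_mul_diagonal]
      have he : (fun k => ((a k : ℂ) + t) * ((a k : ℂ) + t)⁻¹) = fun _ => (1:ℂ) :=
        funext fun k => mul_inv_cancel₀ (hne t ht k)
      rw [he]
      exact Matrix.diagonal_one
    calc Uu * Matrix.diagonal (fun k => (a k : ℂ) + t) * Uuᴴ * (Uu * N t * Uuᴴ)
        = Uu * (Matrix.diagonal (fun k => (a k : ℂ) + t) * N t) * Uuᴴ := by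
          simp only [Matrix.mul_assoc, cancel]
      _ = 1 := by rw [hdig, Matrix.mul_one, mul_eq_one_comm.mp hUu]
  -- the integrand as a double sum
  have hint : ∀ t ∈ Set.Ioi (0:ℝ),
      ((A * ((A + (t : ℂ) • 1)⁻¹ * B * (A + (t : ℂ) • 1)⁻¹)
        - ((A + (t : ℂ) • 1)⁻¹ * B * (A + (t : ℂ) • 1)⁻¹) * A) i j)
      = ∑ x, ∑ k, Uu i k * C k x * star (Uu j x)
          * (((a k - a x) / ((a k + t) * (a x + t)) : ℝ) : ℂ) := by
    intro t ht
    have hM : A * ((A + (t : ℂ) • 1)⁻¹ * B * (A + (t : ℂ) • 1)⁻¹)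
        - ((A + (t : ℂ) • 1)⁻¹ * B * (A + (t : ℂ) • 1)⁻¹) * A
        = Uu * (Matrix.diagonal (fun k => (a k : ℂ)) * (N t * (C * N t))
            - N t * (C * (N t * Matrix.diagonal (fun k => (a k : ℂ))))) * Uuᴴ := by
      rw [hinv t ht]
      rw [hdecomp]
      simp only [hCdef, Matrix.mul_sub, Matrix.sub_mul, Matrix.mul_assoc, cancel, cancel', hUU2, Matrix.mul_one]
    rw [hM, bkm_entry]
    apply Finset.sum_congr rfl
    intro x _
    apply Finset.sum_congr rfl
    intro k _
    have hMe : (Matrix.diagonal (fun k => (a k : ℂ)) * (N t * (C * N t))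
            - N t * (C * (N t * Matrix.diagonal (fun k => (a k : ℂ))))) k x
        = C k x * (((a k - a x) / ((a k + t) * (a x + t)) : ℝ) : ℂ) := by
      rw [hNdef]
      simp only [Matrix.sub_apply, Matrix.diagonal_mul, Matrix.mul_diagonal,
        Matrix.diagonal_mul_diagonal]
      push_cast
      have h1 := hne t ht k
      have h2 := hne t ht x
      field_simp
    rw [hMe]
    ring
  rw [setIntegral_congr_fun measurableSet_Ioi hint]
  -- swap integral and sums
  have hintg : ∀ k x : Fin d, Integrable
      (fun t : ℝ => Uu i k * C k x * star (Uu j x)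
          * (((a k - a x) / ((a k + t) * (a x + t)) : ℝ) : ℂ))
      (volume.restrict (Set.Ioi (0:ℝ))) := by
    intro k x
    exact ((bkm_integrable (ha k) (ha x)).ofReal).const_mul _
  rw [integral_finset_sum _ (fun x _ => integrable_finset_sum _ (fun k _ => hintg k x))]
  have hswap : ∀ x : Fin d,
      (∫ t in Set.Ioi (0:ℝ), ∑ k, Uu i k * C k x * star (Uu j x)
          * (((a k - a x) / ((a k + t) * (a x + t)) : ℝ) : ℂ))
      = ∑ k, Uu i k * C k x * star (Uu j x)
          * ((Real.log (a k) : ℂ) - (Real.log (a x) : ℂ)) := by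
    intro x
    rw [integral_finset_sum _ (fun k _ => hintg k x)]
    apply Finset.sum_congr rfl
    intro k _
    rw [MeasureTheory.integral_const_mul]
    have hco : (∫ t in Set.Ioi (0:ℝ), (((a k - a x) / ((a k + t) * (a x + t)) : ℝ) : ℂ))
        = (((∫ t in Set.Ioi (0:ℝ), (a k - a x) / ((a k + t) * (a x + t))) : ℝ) : ℂ) :=
      integral_ofReal
    rw [hco, bkm_integral (ha k) (ha x)]
    push_cast
    ring
  simp only [hswap]
  -- LHS
  have hL : logA * B - B * logA
      = Uu * (Matrix.diagonal (fun k => (Real.log (a k) : ℂ)) * C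
          - C * Matrix.diagonal (fun k => (Real.log (a k) : ℂ))) * Uuᴴ := by
    rw [hlog]
    simp only [hCdef, Matrix.mul_sub, Matrix.sub_mul, Matrix.mul_assoc, cancel, cancel', hUU2, Matrix.mul_one]
  rw [hL, bkm_entry]
  apply Finset.sum_congr rfl
  intro x _
  apply Finset.sum_congr rfl
  intro k _
  simp only [Matrix.sub_apply, Matrix.diagonal_mul, Matrix.mul_diagonal]
  ring
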